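/- Consider a weighted 2-colored complete graph on the vertex set {1, …, 13} (each pair of distinct vertices has a weight in {1/2, 1} and a color, red or blue) which contains no blue triangle and no red generalized K₇, and whose density g(w) = max over the standard simplex of Σ_{1 ≤ i < j ≤ 13} w(i, j)·u_i·u_j satisfies g(w) ≥ 7/16. Then every vertex is incident to at least two edges of weight 1/2. -/

import Mathlib

open Finset

namespace TwoHalfEdgesAux
open scoped Classical

lemma card_split (s A B : Finset (Fin 13))
    (hA : A ⊆ s) (hB : B ⊆ s)
    (hdisj : ∀ a, a ∈ A → a ∈ B → False)
    (hcover : ∀ a ∈ s, a ∈ A ∨ a ∈ B) : A.card + B.card = s.card := by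
  classical
  have hunion : A ∪ B = s := by
    apply Finset.Subset.antisymm
    · exact Finset.union_subset hA hB
    · intro a ha
      rcases hcover a ha with h | h
      · exact Finset.mem_union_left _ h
      · exact Finset.mem_union_right _ h
  rw [← Finset.card_union_of_disjoint (Finset.disjoint_left.mpr
    (fun a ha hb => hdisj a ha hb)), hunion]


lemma exists_two {s : Finset (Fin 13)} (h : 2 ≤ s.card) :
    ∃ a b, a ∈ s ∧ b ∈ s ∧ a ≠ b := by
  obtain ⟨a, ha⟩ := Finset.card_pos.mp (show 0 < s.card by omega)
  have h2 : 0 < (s.erase a).card := by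
    rw [Finset.card_erase_of_mem ha]; omega
  obtain ⟨b, hb⟩ := Finset.card_pos.mp h2
  exact ⟨a, b, ha, Finset.mem_of_mem_erase hb, (Finset.ne_of_mem_erase hb).symm⟩

lemma exists_three {s : Finset (Fin 13)} (h : 3 ≤ s.card) :
    ∃ a b c, a ∈ s ∧ b ∈ s ∧ c ∈ s ∧ a ≠ b ∧ a ≠ c ∧ b ≠ c := by
  obtain ⟨a, ha⟩ := Finset.card_pos.mp (show 0 < s.card by omega)
  have h2 : 2 ≤ (s.erase a).card := by
    rw [Finset.card_erase_of_mem ha]; omega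
  obtain ⟨b, c, hb, hc, hbc⟩ := exists_two h2
  exact ⟨a, b, c, ha, Finset.mem_of_mem_erase hb, Finset.mem_of_mem_erase hc,
    (Finset.ne_of_mem_erase hb).symm, (Finset.ne_of_mem_erase hc).symm, hbc⟩

lemma exists_four {s : Finset (Fin 13)} (h : 4 ≤ s.card) :
    ∃ a b c d, a ∈ s ∧ b ∈ s ∧ c ∈ s ∧ d ∈ s ∧
      a ≠ b ∧ a ≠ c ∧ a ≠ d ∧ b ≠ c ∧ b ≠ d ∧ c ≠ d := by
  obtain ⟨a, ha⟩ := Finset.card_pos.mp (show 0 < s.card by omega)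
  have h2 : 3 ≤ (s.erase a).card := by
    rw [Finset.card_erase_of_mem ha]; omega
  obtain ⟨b, c, d, hb, hc, hd, hbc, hbd, hcd⟩ := exists_three h2
  exact ⟨a, b, c, d, ha, Finset.mem_of_mem_erase hb, Finset.mem_of_mem_erase hc,
    Finset.mem_of_mem_erase hd,
    (Finset.ne_of_mem_erase hb).symm, (Finset.ne_of_mem_erase hc).symm,
    (Finset.ne_of_mem_erase hd).symm, hbc, hbd, hcd⟩

variable {w : Fin 13 → Fin 13 → ℝ} {red : Fin 13 → Fin 13 → Prop}

lemma forbid6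
    (hredsymm : ∀ i j, red i j ↔ red j i)
    (hno : ¬ ∃ X Y : Finset (Fin 13), Y ⊆ X ∧ X.card + Y.card = 7 ∧
        (∀ i ∈ X, ∀ j ∈ X, i ≠ j → red i j) ∧
        (∀ i ∈ Y, ∀ j ∈ Y, i ≠ j → w i j = 1))
    (p q r s t x : Fin 13)
    (hpq : p ≠ q) (hpr : p ≠ r) (hps : p ≠ s) (hpt : p ≠ t) (hpx : p ≠ x)
    (hqr : q ≠ r) (hqs : q ≠ s) (hqt : q ≠ t) (hqx : q ≠ x)
    (hrs : r ≠ s) (hrt : r ≠ t) (hrx : r ≠ x)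
    (hst : s ≠ t) (hsx : s ≠ x) (htx : t ≠ x)
    (rpq : red p q) (rpr : red p r) (rps : red p s) (rpt : red p t) (rpx : red p x)
    (rqr : red q r) (rqs : red q s) (rqt : red q t) (rqx : red q x)
    (rrs : red r s) (rrt : red r t) (rrx : red r x)
    (rst : red s t) (rsx : red s x) (rtx : red t x) : False := by
  apply hno
  refine ⟨{p, q, r, s, t, x}, {p}, ?_, ?_, ?_, ?_⟩
  · intro a ha; simp only [Finset.mem_singleton] at ha; subst ha; simp
  · have hX : ({p, q, r, s, t, x} : Finset (Fin 13)).card = 6 := by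
      rw [Finset.card_insert_of_notMem (by simp [hpq, hpr, hps, hpt, hpx]),
          Finset.card_insert_of_notMem (by simp [hqr, hqs, hqt, hqx]),
          Finset.card_insert_of_notMem (by simp [hrs, hrt, hrx]),
          Finset.card_insert_of_notMem (by simp [hst, hsx]),
          Finset.card_insert_of_notMem (by simp [htx]), Finset.card_singleton]
    rw [hX, Finset.card_singleton]
  · intro a ha b hb hab
    simp only [Finset.mem_insert, Finset.mem_singleton] at ha hb
    rcases ha with rfl | rfl | rfl | rfl | rfl | rfl <;>
      rcases hb with rfl | rfl | rfl | rfl | rfl | rfl <;>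
      first
        | exact absurd rfl hab
        | assumption
        | exact (hredsymm _ _).mpr (by assumption)
  · intro a ha b hb hab
    simp only [Finset.mem_singleton] at ha hb
    subst ha; subst hb; exact absurd rfl hab

lemma forbid5
    (hredsymm : ∀ i j, red i j ↔ red j i) (hwsymm : ∀ i j, w i j = w j i)
    (hno : ¬ ∃ X Y : Finset (Fin 13), Y ⊆ X ∧ X.card + Y.card = 7 ∧
        (∀ i ∈ X, ∀ j ∈ X, i ≠ j → red i j) ∧
        (∀ i ∈ Y, ∀ j ∈ Y, i ≠ j → w i j = 1))
    (p q r s t : Fin 13)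
    (hpq : p ≠ q) (hpr : p ≠ r) (hps : p ≠ s) (hpt : p ≠ t)
    (hqr : q ≠ r) (hqs : q ≠ s) (hqt : q ≠ t)
    (hrs : r ≠ s) (hrt : r ≠ t) (hst : s ≠ t)
    (rpq : red p q) (rpr : red p r) (rps : red p s) (rpt : red p t)
    (rqr : red q r) (rqs : red q s) (rqt : red q t)
    (rrs : red r s) (rrt : red r t) (rst : red s t)
    (fpq : w p q = 1) : False := by
  apply hno
  refine ⟨{p, q, r, s, t}, {p, q}, ?_, ?_, ?_, ?_⟩
  · intro a ha; simp only [Finset.mem_insert, Finset.mem_singleton] at ha ⊢; tauto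
  · have hX : ({p, q, r, s, t} : Finset (Fin 13)).card = 5 := by
      rw [Finset.card_insert_of_notMem (by simp [hpq, hpr, hps, hpt]),
          Finset.card_insert_of_notMem (by simp [hqr, hqs, hqt]),
          Finset.card_insert_of_notMem (by simp [hrs, hrt]),
          Finset.card_insert_of_notMem (by simp [hst]), Finset.card_singleton]
    have hY : ({p, q} : Finset (Fin 13)).card = 2 := by
      rw [Finset.card_insert_of_notMem (by simp [hpq]), Finset.card_singleton]
    omega
  · intro a ha b hb hab
    simp only [Finset.mem_insert, Finset.mem_singleton] at ha hb
    rcases ha with rfl | rfl | rfl | rfl | rfl <;>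
      rcases hb with rfl | rfl | rfl | rfl | rfl <;>
      first
        | exact absurd rfl hab
        | assumption
        | exact (hredsymm _ _).mpr (by assumption)
  · intro a ha b hb hab
    simp only [Finset.mem_insert, Finset.mem_singleton] at ha hb
    rcases ha with rfl | rfl <;> rcases hb with rfl | rfl <;>
      first
        | exact absurd rfl hab
        | assumption
        | exact (hwsymm _ _).trans (by assumption)

lemma forbid4
    (hredsymm : ∀ i j, red i j ↔ red j i) (hwsymm : ∀ i j, w i j = w j i)
    (hno : ¬ ∃ X Y : Finset (Fin 13), Y ⊆ X ∧ X.card + Y.card = 7 ∧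
        (∀ i ∈ X, ∀ j ∈ X, i ≠ j → red i j) ∧
        (∀ i ∈ Y, ∀ j ∈ Y, i ≠ j → w i j = 1))
    (p q r s : Fin 13)
    (hpq : p ≠ q) (hpr : p ≠ r) (hps : p ≠ s)
    (hqr : q ≠ r) (hqs : q ≠ s) (hrs : r ≠ s)
    (rpq : red p q) (rpr : red p r) (rps : red p s)
    (rqr : red q r) (rqs : red q s) (rrs : red r s)
    (fpq : w p q = 1) (fpr : w p r = 1) (fqr : w q r = 1) : False := by
  apply hno
  refine ⟨{p, q, r, s}, {p, q, r}, ?_, ?_, ?_, ?_⟩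
  · intro a ha; simp only [Finset.mem_insert, Finset.mem_singleton] at ha ⊢; tauto
  · have hX : ({p, q, r, s} : Finset (Fin 13)).card = 4 := by
      rw [Finset.card_insert_of_notMem (by simp [hpq, hpr, hps]),
          Finset.card_insert_of_notMem (by simp [hqr, hqs]),
          Finset.card_insert_of_notMem (by simp [hrs]), Finset.card_singleton]
    have hY : ({p, q, r} : Finset (Fin 13)).card = 3 := by
      rw [Finset.card_insert_of_notMem (by simp [hpq, hpr]),
          Finset.card_insert_of_notMem (by simp [hqr]), Finset.card_singleton]
    omega
  · intro a ha b hb hab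
    simp only [Finset.mem_insert, Finset.mem_singleton] at ha hb
    rcases ha with rfl | rfl | rfl | rfl <;>
      rcases hb with rfl | rfl | rfl | rfl <;>
      first
        | exact absurd rfl hab
        | assumption
        | exact (hredsymm _ _).mpr (by assumption)
  · intro a ha b hb hab
    simp only [Finset.mem_insert, Finset.mem_singleton] at ha hb
    rcases ha with rfl | rfl | rfl <;> rcases hb with rfl | rfl | rfl <;>
      first
        | exact absurd rfl hab
        | assumption
        | exact (hwsymm _ _).trans (by assumption)


lemma exists_five {s : Finset (Fin 13)} (h : 5 ≤ s.card) :
    ∃ a b c d e, a ∈ s ∧ b ∈ s ∧ c ∈ s ∧ d ∈ s ∧ e ∈ s ∧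
      a ≠ b ∧ a ≠ c ∧ a ≠ d ∧ a ≠ e ∧ b ≠ c ∧ b ≠ d ∧ b ≠ e ∧ c ≠ d ∧ c ≠ e ∧ d ≠ e := by
  obtain ⟨a, ha⟩ := Finset.card_pos.mp (show 0 < s.card by omega)
  have h2 : 4 ≤ (s.erase a).card := by
    rw [Finset.card_erase_of_mem ha]; omega
  obtain ⟨b, c, d, e, hb, hc, hd, he, hbc, hbd, hbe, hcd, hce, hde⟩ := exists_four h2
  exact ⟨a, b, c, d, e, ha, Finset.mem_of_mem_erase hb, Finset.mem_of_mem_erase hc,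
    Finset.mem_of_mem_erase hd, Finset.mem_of_mem_erase he,
    (Finset.ne_of_mem_erase hb).symm, (Finset.ne_of_mem_erase hc).symm,
    (Finset.ne_of_mem_erase hd).symm, (Finset.ne_of_mem_erase he).symm,
    hbc, hbd, hbe, hcd, hce, hde⟩

lemma exists_six {s : Finset (Fin 13)} (h : 6 ≤ s.card) :
    ∃ a b c d e f, a ∈ s ∧ b ∈ s ∧ c ∈ s ∧ d ∈ s ∧ e ∈ s ∧ f ∈ s ∧
      a ≠ b ∧ a ≠ c ∧ a ≠ d ∧ a ≠ e ∧ a ≠ f ∧ b ≠ c ∧ b ≠ d ∧ b ≠ e ∧ b ≠ f ∧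
      c ≠ d ∧ c ≠ e ∧ c ≠ f ∧ d ≠ e ∧ d ≠ f ∧ e ≠ f := by
  obtain ⟨a, ha⟩ := Finset.card_pos.mp (show 0 < s.card by omega)
  have h2 : 5 ≤ (s.erase a).card := by
    rw [Finset.card_erase_of_mem ha]; omega
  obtain ⟨b, c, d, e, f, hb, hc, hd, he, hf, hbc, hbd, hbe, hbf, hcd, hce, hcf, hde,
    hdf, hef⟩ := exists_five h2
  exact ⟨a, b, c, d, e, f, ha, Finset.mem_of_mem_erase hb, Finset.mem_of_mem_erase hc,
    Finset.mem_of_mem_erase hd, Finset.mem_of_mem_erase he, Finset.mem_of_mem_erase hf,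
    (Finset.ne_of_mem_erase hb).symm, (Finset.ne_of_mem_erase hc).symm,
    (Finset.ne_of_mem_erase hd).symm, (Finset.ne_of_mem_erase he).symm,
    (Finset.ne_of_mem_erase hf).symm, hbc, hbd, hbe, hbf, hcd, hce, hcf, hde, hdf, hef⟩

/-- R(3,3) ≤ 6 style lemma: a 6-set with no red triangle gives a blue triangle. -/
lemma R33
    (hnoBlue : ∀ a b c : Fin 13, a ≠ b → a ≠ c → b ≠ c → red a b ∨ red a c ∨ red b c)
    (T : Finset (Fin 13)) (hT : 6 ≤ T.card)
    (hnoRedTri : ∀ a ∈ T, ∀ b ∈ T, ∀ c ∈ T, a ≠ b → a ≠ c → b ≠ c →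
      ¬ (red a b ∧ red a c ∧ red b c)) : False := by
  classical
  obtain ⟨t, ht⟩ := Finset.card_pos.mp (show 0 < T.card by omega)
  have hT'c : 5 ≤ (T.erase t).card := by rw [Finset.card_erase_of_mem ht]; omega
  have hsum := Finset.card_filter_add_card_filter_not
    (s := T.erase t) (p := fun z => red t z)
  have h3 : 3 ≤ ((T.erase t).filter (fun z => red t z)).card ∨
      3 ≤ ((T.erase t).filter (fun z => ¬ red t z)).card := by omega
  rcases h3 with h3 | h3
  · obtain ⟨a, b, c, ha, hb, hc, hab, hac, hbc⟩ := exists_three h3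
    simp only [Finset.mem_filter, Finset.mem_erase] at ha hb hc
    have nab : ¬ red a b := fun h =>
      hnoRedTri t ht a ha.1.2 b hb.1.2 (Ne.symm ha.1.1) (Ne.symm hb.1.1) hab ⟨ha.2, hb.2, h⟩
    have nac : ¬ red a c := fun h =>
      hnoRedTri t ht a ha.1.2 c hc.1.2 (Ne.symm ha.1.1) (Ne.symm hc.1.1) hac ⟨ha.2, hc.2, h⟩
    have nbc : ¬ red b c := fun h =>
      hnoRedTri t ht b hb.1.2 c hc.1.2 (Ne.symm hb.1.1) (Ne.symm hc.1.1) hbc ⟨hb.2, hc.2, h⟩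
    rcases hnoBlue a b c hab hac hbc with h | h | h <;> tauto
  · obtain ⟨a, b, c, ha, hb, hc, hab, hac, hbc⟩ := exists_three h3
    simp only [Finset.mem_filter, Finset.mem_erase] at ha hb hc
    have rab : red a b := by
      rcases hnoBlue t a b (Ne.symm ha.1.1) (Ne.symm hb.1.1) hab with h | h | h
      · exact absurd h ha.2
      · exact absurd h hb.2
      · exact h
    have rac : red a c := by
      rcases hnoBlue t a c (Ne.symm ha.1.1) (Ne.symm hc.1.1) hac with h | h | h
      · exact absurd h ha.2
      · exact absurd h hc.2
      · exact h
    have rbc : red b c := by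
      rcases hnoBlue t b c (Ne.symm hb.1.1) (Ne.symm hc.1.1) hbc with h | h | h
      · exact absurd h hb.2
      · exact absurd h hc.2
      · exact h
    exact hnoRedTri a ha.1.2 b hb.1.2 c hc.1.2 hab hac hbc ⟨rab, rac, rbc⟩


/-- no red 5-clique containing the bad vertex v -/
lemma noRedK5v
    (hredsymm : ∀ i j, red i j ↔ red j i) (hwsymm : ∀ i j, w i j = w j i)
    (hno : ¬ ∃ X Y : Finset (Fin 13), Y ⊆ X ∧ X.card + Y.card = 7 ∧
        (∀ i ∈ X, ∀ j ∈ X, i ≠ j → red i j) ∧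
        (∀ i ∈ Y, ∀ j ∈ Y, i ≠ j → w i j = 1))
    (v : Fin 13)
    (hOne : ∀ j k : Fin 13, j ≠ v → k ≠ v → j ≠ k → w v j = 1 ∨ w v k = 1)
    (r1 r2 r3 r4 : Fin 13)
    (h1v : r1 ≠ v) (h2v : r2 ≠ v) (h3v : r3 ≠ v) (h4v : r4 ≠ v)
    (h12 : r1 ≠ r2) (h13 : r1 ≠ r3) (h14 : r1 ≠ r4)
    (h23 : r2 ≠ r3) (h24 : r2 ≠ r4) (h34 : r3 ≠ r4)
    (rv1 : red v r1) (rv2 : red v r2) (rv3 : red v r3) (rv4 : red v r4)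
    (r12 : red r1 r2) (r13 : red r1 r3) (r14 : red r1 r4)
    (r23 : red r2 r3) (r24 : red r2 r4) (r34 : red r3 r4) : False := by
  rcases hOne r1 r2 h1v h2v h12 with hf | hf
  · exact forbid5 hredsymm hwsymm hno v r1 r2 r3 r4
      h1v.symm h2v.symm h3v.symm h4v.symm h12 h13 h14 h23 h24 h34
      rv1 rv2 rv3 rv4 r12 r13 r14 r23 r24 r34 hf
  · exact forbid5 hredsymm hwsymm hno v r2 r1 r3 r4
      h2v.symm h1v.symm h3v.symm h4v.symm h12.symm h23 h24 h13 h14 h34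
      rv2 rv1 rv3 rv4 ((hredsymm _ _).mpr r12) r23 r24 r13 r14 r34 hf

/-- the bad vertex has blue degree at least 4 -/
lemma blue4
    (hredsymm : ∀ i j, red i j ↔ red j i) (hwsymm : ∀ i j, w i j = w j i)
    (hnoBlue : ∀ a b c : Fin 13, a ≠ b → a ≠ c → b ≠ c → red a b ∨ red a c ∨ red b c)
    (hno : ¬ ∃ X Y : Finset (Fin 13), Y ⊆ X ∧ X.card + Y.card = 7 ∧
        (∀ i ∈ X, ∀ j ∈ X, i ≠ j → red i j) ∧
        (∀ i ∈ Y, ∀ j ∈ Y, i ≠ j → w i j = 1))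
    (v : Fin 13)
    (hOne : ∀ j k : Fin 13, j ≠ v → k ≠ v → j ≠ k → w v j = 1 ∨ w v k = 1) :
    4 ≤ ((Finset.univ.erase v).filter (fun j => ¬ red v j)).card := by
  classical
  by_contra hlt
  push_neg at hlt
  have hsplit := Finset.card_filter_add_card_filter_not
    (s := Finset.univ.erase v) (p := fun j => red v j)
  have hcard12 : (Finset.univ.erase v).card = 12 := by
    rw [Finset.card_erase_of_mem (Finset.mem_univ v)]
    simp
  have hRv9 : 9 ≤ ((Finset.univ.erase v).filter (fun j => red v j)).card := by omega
  obtain ⟨S, hSsub, hS9⟩ :=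
    Finset.exists_subset_card_eq (s := (Finset.univ.erase v).filter (fun j => red v j)) (n := 9) hRv9
  have hSfact : ∀ y ∈ S, y ≠ v ∧ red v y := by
    intro y hy
    have := hSsub hy
    simp only [Finset.mem_filter, Finset.mem_erase] at this
    exact ⟨this.1.1, this.2⟩
  -- no red K4 inside S
  have hK4 : ∀ a ∈ S, ∀ b ∈ S, ∀ c ∈ S, ∀ d ∈ S,
      a ≠ b → a ≠ c → a ≠ d → b ≠ c → b ≠ d → c ≠ d →
      red a b → red a c → red a d → red b c → red b d → red c d → False := by
    intro a ha b hb c hc d hd hab hac had hbc hbd hcd rab rac rad rbc rbd rcd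
    exact noRedK5v hredsymm hwsymm hno v hOne a b c d
      (hSfact a ha).1 (hSfact b hb).1 (hSfact c hc).1 (hSfact d hd).1
      hab hac had hbc hbd hcd
      (hSfact a ha).2 (hSfact b hb).2 (hSfact c hc).2 (hSfact d hd).2
      rab rac rad rbc rbd rcd
  -- every vertex of S has exactly 3 non-red neighbours inside S
  have hdeg : ∀ y ∈ S, ((S.erase y).filter (fun z => ¬ red y z)).card = 3 := by
    intro y hy
    have h8 : (S.erase y).card = 8 := by rw [Finset.card_erase_of_mem hy, hS9]
    have hsplit2 := Finset.card_filter_add_card_filter_not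
      (s := S.erase y) (p := fun z => red y z)
    have hBy3 : ((S.erase y).filter (fun z => ¬ red y z)).card ≤ 3 := by
      by_contra hB
      push_neg at hB
      obtain ⟨b1, b2, b3, b4, m1, m2, m3, m4, d12, d13, d14, d23, d24, d34⟩ :=
        exists_four hB
      simp only [Finset.mem_filter, Finset.mem_erase] at m1 m2 m3 m4
      have pr : ∀ p q : Fin 13, p ∈ S.erase y → q ∈ S.erase y → ¬ red y p → ¬ red y q →
          p ≠ q → red p q := by
        intro p q hp hq hnp hnq hpq
        rcases hnoBlue y p q (Ne.symm (Finset.mem_erase.mp hp).1)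
          (Ne.symm (Finset.mem_erase.mp hq).1) hpq with h | h | h
        · exact absurd h hnp
        · exact absurd h hnq
        · exact h
      have e1 : b1 ∈ S.erase y := Finset.mem_erase.mpr ⟨m1.1.1, m1.1.2⟩
      have e2 : b2 ∈ S.erase y := Finset.mem_erase.mpr ⟨m2.1.1, m2.1.2⟩
      have e3 : b3 ∈ S.erase y := Finset.mem_erase.mpr ⟨m3.1.1, m3.1.2⟩
      have e4 : b4 ∈ S.erase y := Finset.mem_erase.mpr ⟨m4.1.1, m4.1.2⟩
      exact hK4 b1 m1.1.2 b2 m2.1.2 b3 m3.1.2 b4 m4.1.2 d12 d13 d14 d23 d24 d34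
        (pr _ _ e1 e2 m1.2 m2.2 d12) (pr _ _ e1 e3 m1.2 m3.2 d13)
        (pr _ _ e1 e4 m1.2 m4.2 d14) (pr _ _ e2 e3 m2.2 m3.2 d23)
        (pr _ _ e2 e4 m2.2 m4.2 d24) (pr _ _ e3 e4 m3.2 m4.2 d34)
    have hRy5 : ((S.erase y).filter (fun z => red y z)).card ≤ 5 := by
      by_contra hR
      push_neg at hR
      apply R33 hnoBlue ((S.erase y).filter (fun z => red y z)) hR
      intro a ha b hb c hc hab hac hbc ⟨rab, rac, rbc⟩
      simp only [Finset.mem_filter, Finset.mem_erase] at ha hb hc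
      exact hK4 y hy a ha.1.2 b hb.1.2 c hc.1.2
        (Ne.symm ha.1.1) (Ne.symm hb.1.1) (Ne.symm hc.1.1) hab hac hbc
        ha.2 hb.2 hc.2 rab rac rbc
    omega
  -- parity contradiction
  set P : Finset (Fin 13 × Fin 13) :=
    (S ×ˢ S).filter (fun p => p.1 ≠ p.2 ∧ ¬ red p.1 p.2) with hP
  have hPmem : ∀ p : Fin 13 × Fin 13,
      p ∈ P ↔ p.1 ∈ S ∧ p.2 ∈ S ∧ p.1 ≠ p.2 ∧ ¬ red p.1 p.2 := by
    intro p
    simp only [hP, Finset.mem_filter, Finset.mem_product]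
    tauto
  have hP27 : P.card = 27 := by
    have hfib : ∀ p ∈ P, p.1 ∈ S := fun p hp => ((hPmem p).mp hp).1
    rw [Finset.card_eq_sum_card_fiberwise hfib]
    have hfibcard : ∀ y ∈ S, (P.filter (fun p => p.1 = y)).card = 3 := by
      intro y hy
      rw [← hdeg y hy]
      apply Finset.card_bij (fun p _ => p.2)
      · intro p hp
        simp only [Finset.mem_filter] at hp
        obtain ⟨hp1, hp2⟩ := hp
        rw [hPmem p] at hp1
        subst hp2
        simp only [Finset.mem_filter, Finset.mem_erase]
        exact ⟨⟨Ne.symm hp1.2.2.1, hp1.2.1⟩, hp1.2.2.2⟩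
      · intro p hp q hq hpq
        simp only [Finset.mem_filter] at hp hq
        have : p.1 = q.1 := hp.2.trans hq.2.symm
        exact Prod.ext this hpq
      · intro z hz
        simp only [Finset.mem_filter, Finset.mem_erase] at hz
        refine ⟨(y, z), ?_, rfl⟩
        simp only [Finset.mem_filter]
        exact ⟨(hPmem (y, z)).mpr ⟨hy, hz.1.2, Ne.symm hz.1.1, hz.2⟩, by trivial⟩
    rw [Finset.sum_congr rfl hfibcard, Finset.sum_const, hS9]
    norm_num
  have hEven : ∃ k, P.card = 2 * k := by
    have hsplitP := Finset.card_filter_add_card_filter_not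
      (s := P) (p := fun p => p.1 < p.2)
    have hbij : (P.filter (fun p => p.1 < p.2)).card
        = (P.filter (fun p => ¬ p.1 < p.2)).card := by
      apply Finset.card_bij (fun p _ => Prod.swap p)
      · intro p hp
        simp only [Finset.mem_filter] at hp ⊢
        obtain ⟨hp1, hp2⟩ := hp
        rw [hPmem p] at hp1
        constructor
        · rw [hPmem]
          exact ⟨hp1.2.1, hp1.1, Ne.symm hp1.2.2.1,
            fun h => hp1.2.2.2 ((hredsymm _ _).mp h)⟩
        · exact fun h => absurd hp2 (asymm h)
      · intro p hp q hq hpq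
        exact Prod.swap_injective hpq
      · intro p hp
        simp only [Finset.mem_filter] at hp
        obtain ⟨hp1, hp2⟩ := hp
        rw [hPmem p] at hp1
        refine ⟨Prod.swap p, ?_, Prod.swap_swap p⟩
        simp only [Finset.mem_filter]
        constructor
        · rw [hPmem]
          exact ⟨hp1.2.1, hp1.1, Ne.symm hp1.2.2.1,
            fun h => hp1.2.2.2 ((hredsymm _ _).mp h)⟩
        · simp only [Prod.fst_swap, Prod.snd_swap]
          exact lt_of_le_of_ne (not_lt.mp hp2) (Ne.symm hp1.2.2.1)
    omega
  obtain ⟨k, hk⟩ := hEven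
  omega


/-- The core combinatorial lemma: no 6 pairwise-full vertices can exist
if some vertex has at most one half edge. -/
lemma core
    (hredsymm : ∀ i j, red i j ↔ red j i) (hwsymm : ∀ i j, w i j = w j i)
    (hnoBlue : ∀ a b c : Fin 13, a ≠ b → a ≠ c → b ≠ c → red a b ∨ red a c ∨ red b c)
    (hno : ¬ ∃ X Y : Finset (Fin 13), Y ⊆ X ∧ X.card + Y.card = 7 ∧
        (∀ i ∈ X, ∀ j ∈ X, i ≠ j → red i j) ∧
        (∀ i ∈ Y, ∀ j ∈ Y, i ≠ j → w i j = 1))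
    (v : Fin 13)
    (hOne : ∀ j k : Fin 13, j ≠ v → k ≠ v → j ≠ k → w v j = 1 ∨ w v k = 1)
    (T : Finset (Fin 13)) (hT6 : T.card = 6)
    (hTfull : ∀ i ∈ T, ∀ j ∈ T, i ≠ j → w i j = 1) : False := by
  classical
  -- Step 1: find a set N of 5 vertices, pairwise full, all full to v and ≠ v.
  obtain ⟨N, hN5, hNv, hNT, hNfull⟩ :
      ∃ N : Finset (Fin 13), N.card = 5 ∧ v ∉ N ∧ (∀ n ∈ N, n ∈ T) ∧
        (∀ n ∈ N, w v n = 1) := by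
    by_cases hvT : v ∈ T
    · refine ⟨T.erase v, ?_, Finset.notMem_erase v T, ?_, ?_⟩
      · rw [Finset.card_erase_of_mem hvT, hT6]
      · exact fun n hn => Finset.mem_of_mem_erase hn
      · intro n hn
        exact hTfull v hvT n (Finset.mem_of_mem_erase hn)
          (Ne.symm (Finset.ne_of_mem_erase hn))
    · have hle1 : (T.filter (fun n => ¬ w v n = 1)).card ≤ 1 := by
        rw [Finset.card_le_one]
        intro a ha b hb
        by_contra hab
        simp only [Finset.mem_filter] at ha hb
        have hav : a ≠ v := fun h => hvT (h ▸ ha.1)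
        have hbv : b ≠ v := fun h => hvT (h ▸ hb.1)
        rcases hOne a b hav hbv hab with h | h
        · exact ha.2 h
        · exact hb.2 h
      have hsplit := Finset.card_filter_add_card_filter_not
        (s := T) (p := fun n => w v n = 1)
      have h5 : 5 ≤ (T.filter (fun n => w v n = 1)).card := by omega
      obtain ⟨N, hNsub, hN5⟩ :=
        Finset.exists_subset_card_eq (s := T.filter (fun n => w v n = 1)) (n := 5) h5
      refine ⟨N, hN5, ?_, ?_, ?_⟩
      · intro hvN
        exact hvT (Finset.mem_filter.mp (hNsub hvN)).1
      · exact fun n hn => (Finset.mem_filter.mp (hNsub hn)).1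
      · exact fun n hn => (Finset.mem_filter.mp (hNsub hn)).2
  have hNne : ∀ n ∈ N, n ≠ v := fun n hn h => hNv (h ▸ hn)
  have hNpair : ∀ m ∈ N, ∀ n ∈ N, m ≠ n → w m n = 1 := by
    intro m hm n hn hmn
    exact hTfull m (hNT m hm) n (hNT n hn) hmn
  -- Step 2: blue and red neighborhoods of v
  set Bv := (Finset.univ.erase v).filter (fun j => ¬ red v j) with hBvdef
  set Rv := (Finset.univ.erase v).filter (fun j => red v j) with hRvdef
  have hBvred : ∀ a ∈ Bv, ∀ b ∈ Bv, a ≠ b → red a b := by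
    intro a ha b hb hab
    simp only [hBvdef, Finset.mem_filter, Finset.mem_erase] at ha hb
    rcases hnoBlue v a b (Ne.symm ha.1.1) (Ne.symm hb.1.1) hab with h | h | h
    · exact absurd h ha.2
    · exact absurd h hb.2
    · exact h
  have hBv4 : 4 ≤ Bv.card := blue4 hredsymm hwsymm hnoBlue hno v hOne
  have hBv5 : Bv.card ≤ 5 := by
    by_contra hB
    push_neg at hB
    obtain ⟨a, b, c, d, e, f, ha, hb, hc, hd, he, hf,
      hab, hac, had, hae, haf, hbc, hbd, hbe, hbf, hcd, hce, hcf, hde, hdf, hef⟩ :=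
      exists_six hB
    exact forbid6 hredsymm hno a b c d e f
      hab hac had hae haf hbc hbd hbe hbf hcd hce hcf hde hdf hef
      (hBvred a ha b hb hab) (hBvred a ha c hc hac) (hBvred a ha d hd had)
      (hBvred a ha e he hae) (hBvred a ha f hf haf) (hBvred b hb c hc hbc)
      (hBvred b hb d hd hbd) (hBvred b hb e he hbe) (hBvred b hb f hf hbf)
      (hBvred c hc d hd hcd) (hBvred c hc e he hce) (hBvred c hc f hf hcf)
      (hBvred d hd e he hde) (hBvred d hd f hf hdf) (hBvred e he f hf hef)
  have hcard12 : (Finset.univ.erase v).card = 12 := by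
    rw [Finset.card_erase_of_mem (Finset.mem_univ v)]
    simp
  have hRBsplit : Rv.card + Bv.card = 12 := by
    rw [← hcard12]
    apply card_split
    · rw [hRvdef]; exact Finset.filter_subset _ _
    · rw [hBvdef]; exact Finset.filter_subset _ _
    · intro a ha hb
      rw [hRvdef, Finset.mem_filter] at ha
      rw [hBvdef, Finset.mem_filter] at hb
      exact hb.2 ha.2
    · intro a ha
      by_cases h : red v a
      · left; rw [hRvdef, Finset.mem_filter]; exact ⟨ha, h⟩
      · right; rw [hBvdef, Finset.mem_filter]; exact ⟨ha, h⟩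
  have hRv7 : 7 ≤ Rv.card := by omega
  have hRvfact : ∀ x ∈ Rv, x ≠ v ∧ red v x := by
    intro x hx
    simp only [hRvdef, Finset.mem_filter, Finset.mem_erase] at hx
    exact ⟨hx.1.1, hx.2⟩
  -- RC and BC
  set RC := N.filter (fun n => red v n) with hRCdef
  set BC := N.filter (fun n => ¬ red v n) with hBCdef
  have hRCBC : RC.card + BC.card = 5 := by
    rw [← hN5]
    apply card_split
    · rw [hRCdef]; exact Finset.filter_subset _ _
    · rw [hBCdef]; exact Finset.filter_subset _ _
    · intro a ha hb
      rw [hRCdef, Finset.mem_filter] at ha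
      rw [hBCdef, Finset.mem_filter] at hb
      exact hb.2 ha.2
    · intro a ha
      by_cases h : red v a
      · left; rw [hRCdef, Finset.mem_filter]; exact ⟨ha, h⟩
      · right; rw [hBCdef, Finset.mem_filter]; exact ⟨ha, h⟩
  have hRCmem : ∀ a ∈ RC, a ∈ N ∧ red v a := by
    intro a ha
    simp only [hRCdef, Finset.mem_filter] at ha
    exact ha
  -- Step 3: BC.card ≤ 2
  have hBC2 : BC.card ≤ 2 := by
    by_contra hBC
    push_neg at hBC
    obtain ⟨b1, b2, b3, h1, h2, h3, h12, h13, h23⟩ := exists_three hBC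
    simp only [hBCdef, Finset.mem_filter] at h1 h2 h3
    have hb1v : b1 ∈ Bv := by
      simp only [hBvdef, Finset.mem_filter, Finset.mem_erase]
      exact ⟨⟨hNne b1 h1.1, Finset.mem_univ b1⟩, h1.2⟩
    have hb2v : b2 ∈ Bv := by
      simp only [hBvdef, Finset.mem_filter, Finset.mem_erase]
      exact ⟨⟨hNne b2 h2.1, Finset.mem_univ b2⟩, h2.2⟩
    have hb3v : b3 ∈ Bv := by
      simp only [hBvdef, Finset.mem_filter, Finset.mem_erase]
      exact ⟨⟨hNne b3 h3.1, Finset.mem_univ b3⟩, h3.2⟩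
    have hlt : ({b1, b2, b3} : Finset (Fin 13)).card < Bv.card := by
      have : ({b1, b2, b3} : Finset (Fin 13)).card ≤ 3 := by
        apply le_trans (Finset.card_insert_le _ _)
        apply Nat.succ_le_succ
        apply le_trans (Finset.card_insert_le _ _)
        simp
      omega
    obtain ⟨b4, hb4, hb4n⟩ : ∃ b4, b4 ∈ Bv ∧ b4 ∉ ({b1, b2, b3} : Finset (Fin 13)) := by
      by_contra hcon
      push_neg at hcon
      have := Finset.card_le_card (fun a ha => hcon a ha)
      omega
    simp only [Finset.mem_insert, Finset.mem_singleton] at hb4n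
    push_neg at hb4n
    obtain ⟨n41, n42, n43⟩ := hb4n
    exact forbid4 hredsymm hwsymm hno b1 b2 b3 b4
      h12 h13 (Ne.symm n41) h23 (Ne.symm n42) (Ne.symm n43)
      (hBvred b1 hb1v b2 hb2v h12) (hBvred b1 hb1v b3 hb3v h13)
      (hBvred b1 hb1v b4 hb4 (Ne.symm n41)) (hBvred b2 hb2v b3 hb3v h23)
      (hBvred b2 hb2v b4 hb4 (Ne.symm n42)) (hBvred b3 hb3v b4 hb4 (Ne.symm n43))
      (hNpair b1 h1.1 b2 h2.1 h12) (hNpair b1 h1.1 b3 h3.1 h13)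
      (hNpair b2 h2.1 b3 h3.1 h23)
  have hRC3 : 3 ≤ RC.card := by omega
  -- W = Rv \ N
  set W := Rv \ N with hWdef
  have hWfact : ∀ x ∈ W, x ≠ v ∧ red v x ∧ x ∉ N := by
    intro x hx
    rw [hWdef, Finset.mem_sdiff] at hx
    exact ⟨(hRvfact x hx.1).1, (hRvfact x hx.1).2, hx.2⟩
  have hRvN : Rv ∩ N = RC := by
    ext n
    simp only [hRvdef, hRCdef, Finset.mem_inter, Finset.mem_filter, Finset.mem_erase]
    constructor
    · rintro ⟨⟨_, hr⟩, hn⟩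
      exact ⟨hn, hr⟩
    · rintro ⟨hn, hr⟩
      exact ⟨⟨⟨hNne n hn, Finset.mem_univ n⟩, hr⟩, hn⟩
  have hWcard : W.card + RC.card = Rv.card := by
    rw [hWdef]
    have := Finset.card_inter_add_card_sdiff Rv N
    rw [hRvN] at this
    omega
  -- I/K pair lemmas for any x outside N that is red to v
  have hIpair : ∀ x, x ≠ v → red v x → x ∉ N →
      ∀ a ∈ RC, ∀ b ∈ RC, red x a → red x b → a ≠ b → ¬ red a b := by
    intro x hxv hvx hxN a ha b hb hxa hxb hab hrab
    obtain ⟨haN, hva⟩ := hRCmem a ha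
    obtain ⟨hbN, hvb⟩ := hRCmem b hb
    exact forbid4 hredsymm hwsymm hno v a b x
      (Ne.symm (hNne a haN)) (Ne.symm (hNne b hbN)) (Ne.symm hxv)
      hab (fun h => hxN (h ▸ haN)) (fun h => hxN (h ▸ hbN))
      hva hvb hvx hrab ((hredsymm _ _).mpr hxa) ((hredsymm _ _).mpr hxb)
      (hNfull a haN) (hNfull b hbN) (hNpair a haN b hbN hab)
  have hKpair : ∀ x, x ∉ N →
      ∀ a ∈ RC, ∀ b ∈ RC, ¬ red x a → ¬ red x b → a ≠ b → red a b := by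
    intro x hxN a ha b hb hxa hxb hab
    obtain ⟨haN, _⟩ := hRCmem a ha
    obtain ⟨hbN, _⟩ := hRCmem b hb
    rcases hnoBlue x a b (fun h => hxN (h ▸ haN)) (fun h => hxN (h ▸ hbN)) hab
      with h | h | h
    · exact absurd h hxa
    · exact absurd h hxb
    · exact h
  have hIcard : ∀ x, x ≠ v → red v x → x ∉ N →
      (RC.filter (fun a => red x a)).card ≤ 2 := by
    intro x hxv hvx hxN
    by_contra hI
    push_neg at hI
    obtain ⟨a, b, c, ha, hb, hc, hab, hac, hbc⟩ := exists_three hI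
    simp only [Finset.mem_filter] at ha hb hc
    have nab := hIpair x hxv hvx hxN a ha.1 b hb.1 ha.2 hb.2 hab
    have nac := hIpair x hxv hvx hxN a ha.1 c hc.1 ha.2 hc.2 hac
    have nbc := hIpair x hxv hvx hxN b hb.1 c hc.1 hb.2 hc.2 hbc
    rcases hnoBlue a b c hab hac hbc with h | h | h <;> tauto
  have hKcard : ∀ x, x ≠ v → red v x → x ∉ N →
      (RC.filter (fun a => ¬ red x a)).card ≤ 2 := by
    intro x hxv hvx hxN
    by_contra hK
    push_neg at hK
    obtain ⟨a, b, c, ha, hb, hc, hab, hac, hbc⟩ := exists_three hK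
    simp only [Finset.mem_filter] at ha hb hc
    obtain ⟨haN, hva⟩ := hRCmem a ha.1
    obtain ⟨hbN, hvb⟩ := hRCmem b hb.1
    obtain ⟨hcN, hvc⟩ := hRCmem c hc.1
    exact forbid4 hredsymm hwsymm hno v a b c
      (Ne.symm (hNne a haN)) (Ne.symm (hNne b hbN)) (Ne.symm (hNne c hcN))
      hab hac hbc hva hvb hvc
      (hKpair x hxN a ha.1 b hb.1 ha.2 hb.2 hab)
      (hKpair x hxN a ha.1 c hc.1 ha.2 hc.2 hac)
      (hKpair x hxN b hb.1 c hc.1 hb.2 hc.2 hbc)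
      (hNfull a haN) (hNfull b hbN) (hNpair a haN b hbN hab)
  have hIK : ∀ x : Fin 13,
      (RC.filter (fun a => red x a)).card + (RC.filter (fun a => ¬ red x a)).card
        = RC.card := by
    intro x
    apply card_split
    · exact Finset.filter_subset _ _
    · exact Finset.filter_subset _ _
    · intro a ha hb
      rw [Finset.mem_filter] at ha hb
      exact hb.2 ha.2
    · intro a ha
      by_cases h : red x a
      · left; rw [Finset.mem_filter]; exact ⟨ha, h⟩
      · right; rw [Finset.mem_filter]; exact ⟨ha, h⟩
  have hRC4 : RC.card ≤ 4 := by
    have hWpos : 0 < W.card := by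
      have : RC.card ≤ 5 := by
        rw [hRCdef]
        exact le_trans (Finset.card_filter_le _ _) (le_of_eq hN5)
      omega
    obtain ⟨x, hx⟩ := Finset.card_pos.mp hWpos
    obtain ⟨hxv, hvx, hxN⟩ := hWfact x hx
    have h1 := hIcard x hxv hvx hxN
    have h2 := hKcard x hxv hvx hxN
    have h3 := hIK x
    omega
  have hcase : RC.card = 4 ∨ RC.card = 3 := by omega
  rcases hcase with hRC | hRC
  · -- CASE |RC| = 4
    have hW3 : 3 ≤ W.card := by omega
    obtain ⟨x1, x2, x3, hx1, hx2, hx3, hd12, hd13, hd23⟩ := exists_three hW3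
    obtain ⟨h1v, hv1, h1N⟩ := hWfact x1 hx1
    obtain ⟨h2v, hv2, h2N⟩ := hWfact x2 hx2
    obtain ⟨h3v, hv3, h3N⟩ := hWfact x3 hx3
    have hIcard2 : ∀ x, x ≠ v → red v x → x ∉ N →
        (RC.filter (fun a => red x a)).card = 2 := by
      intro x hxv hvx hxN
      have h1 := hIcard x hxv hvx hxN
      have h2 := hKcard x hxv hvx hxN
      have h3 := hIK x
      omega
    have hKcard2 : ∀ x, x ≠ v → red v x → x ∉ N →
        (RC.filter (fun a => ¬ red x a)).card = 2 := by
      intro x hxv hvx hxN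
      have h1 := hIcard x hxv hvx hxN
      have h2 := hKcard x hxv hvx hxN
      have h3 := hIK x
      omega
    have hxred : ∀ x y, x ≠ v → red v x → x ∉ N → y ≠ v → red v y → y ∉ N →
        x ≠ y → red x y := by
      intro x y hxv hvx hxN hyv hvy hyN hxy
      by_contra hnr
      have hsub : RC.filter (fun a => ¬ red y a) ⊆ RC.filter (fun a => red x a) := by
        intro a ha
        rw [Finset.mem_filter] at ha ⊢
        refine ⟨ha.1, ?_⟩
        by_contra hnxa
        obtain ⟨haN, _⟩ := hRCmem a ha.1
        rcases hnoBlue x y a hxy (fun h => hxN (h ▸ haN)) (fun h => hyN (h ▸ haN))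
          with h | h | h
        · exact hnr h
        · exact hnxa h
        · exact ha.2 h
      have heq : RC.filter (fun a => ¬ red y a) = RC.filter (fun a => red x a) := by
        apply Finset.eq_of_subset_of_card_le hsub
        rw [hIcard2 x hxv hvx hxN, hKcard2 y hyv hvy hyN]
      have hK2 : 2 ≤ (RC.filter (fun a => ¬ red y a)).card := by
        rw [hKcard2 y hyv hvy hyN]
      obtain ⟨p, q, hp, hq, hpq⟩ := exists_two hK2
      have hp' : p ∈ RC.filter (fun a => red x a) := by rw [← heq]; exact hp
      have hq' : q ∈ RC.filter (fun a => red x a) := by rw [← heq]; exact hq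
      rw [Finset.mem_filter] at hp hq hp' hq'
      exact hIpair x hxv hvx hxN p hp'.1 q hq'.1 hp'.2 hq'.2 hpq
        (hKpair y hyN p hp.1 q hq.1 hp.2 hq.2 hpq)
    have r12 : red x1 x2 := hxred x1 x2 h1v hv1 h1N h2v hv2 h2N hd12
    have r13 : red x1 x3 := hxred x1 x3 h1v hv1 h1N h3v hv3 h3N hd13
    have r23 : red x2 x3 := hxred x2 x3 h2v hv2 h2N h3v hv3 h3N hd23
    have hint : ∀ x y, x ≠ v → red v x → x ∉ N → y ≠ v → red v y → y ∉ N →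
        ∃ a ∈ RC, red x a ∧ red y a := by
      intro x y hxv hvx hxN hyv hvy hyN
      by_contra hemp
      push_neg at hemp
      have hsub : RC.filter (fun a => red y a) ⊆ RC.filter (fun a => ¬ red x a) := by
        intro a ha
        rw [Finset.mem_filter] at ha ⊢
        exact ⟨ha.1, fun hxa => hemp a ha.1 hxa ha.2⟩
      have heq : RC.filter (fun a => red y a) = RC.filter (fun a => ¬ red x a) := by
        apply Finset.eq_of_subset_of_card_le hsub
        rw [hIcard2 y hyv hvy hyN, hKcard2 x hxv hvx hxN]
      have hI2 : 2 ≤ (RC.filter (fun a => red y a)).card := by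
        rw [hIcard2 y hyv hvy hyN]
      obtain ⟨p, q, hp, hq, hpq⟩ := exists_two hI2
      have hp' : p ∈ RC.filter (fun a => ¬ red x a) := by rw [← heq]; exact hp
      have hq' : q ∈ RC.filter (fun a => ¬ red x a) := by rw [← heq]; exact hq
      rw [Finset.mem_filter] at hp hq hp' hq'
      exact hIpair y hyv hvy hyN p hp.1 q hq.1 hp.2 hq.2 hpq
        (hKpair x hxN p hp'.1 q hq'.1 hp'.2 hq'.2 hpq)
    obtain ⟨z12, hz12RC, hz12x1, hz12x2⟩ := hint x1 x2 h1v hv1 h1N h2v hv2 h2N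
    obtain ⟨z13, hz13RC, hz13x1, hz13x3⟩ := hint x1 x3 h1v hv1 h1N h3v hv3 h3N
    obtain ⟨z23, hz23RC, hz23x2, hz23x3⟩ := hint x2 x3 h2v hv2 h2N h3v hv3 h3N
    have hz12N := (hRCmem z12 hz12RC).1
    have hz13N := (hRCmem z13 hz13RC).1
    have hz23N := (hRCmem z23 hz23RC).1
    by_cases hc1 : red x3 z12
    · exact noRedK5v hredsymm hwsymm hno v hOne x1 x2 x3 z12
        h1v h2v h3v (hNne z12 hz12N)
        hd12 hd13 (fun h => h1N (h ▸ hz12N)) hd23 (fun h => h2N (h ▸ hz12N))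
        (fun h => h3N (h ▸ hz12N))
        hv1 hv2 hv3 (hRCmem z12 hz12RC).2
        r12 r13 hz12x1 r23 hz12x2 hc1
    · by_cases hc2 : red x2 z13
      · exact noRedK5v hredsymm hwsymm hno v hOne x1 x2 x3 z13
          h1v h2v h3v (hNne z13 hz13N)
          hd12 hd13 (fun h => h1N (h ▸ hz13N)) hd23 (fun h => h2N (h ▸ hz13N))
          (fun h => h3N (h ▸ hz13N))
          hv1 hv2 hv3 (hRCmem z13 hz13RC).2
          r12 r13 hz13x1 r23 hc2 hz13x3
      · have d1213 : z12 ≠ z13 := fun h => hc1 (by rw [h]; exact hz13x3)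
        have d1223 : z12 ≠ z23 := fun h => hc1 (by rw [h]; exact hz23x3)
        have d1323 : z13 ≠ z23 := fun h => hc2 (by rw [h]; exact hz23x2)
        have n1 : ¬ red z12 z13 :=
          hIpair x1 h1v hv1 h1N z12 hz12RC z13 hz13RC hz12x1 hz13x1 d1213
        have n2 : ¬ red z12 z23 :=
          hIpair x2 h2v hv2 h2N z12 hz12RC z23 hz23RC hz12x2 hz23x2 d1223
        have n3 : ¬ red z13 z23 :=
          hIpair x3 h3v hv3 h3N z13 hz13RC z23 hz23RC hz13x3 hz23x3 d1323
        rcases hnoBlue z12 z13 z23 d1213 d1223 d1323 with h | h | h <;> tauto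
  · -- CASE |RC| = 3
    have hBC2' : BC.card = 2 := by omega
    obtain ⟨b1, b2, hb1, hb2, hb12⟩ := exists_two (le_of_eq hBC2'.symm)
    have hb1f : b1 ∈ N ∧ ¬ red v b1 := by
      rw [hBCdef, Finset.mem_filter] at hb1; exact hb1
    have hb2f : b2 ∈ N ∧ ¬ red v b2 := by
      rw [hBCdef, Finset.mem_filter] at hb2; exact hb2
    have hb1Bv : b1 ∈ Bv := by
      rw [hBvdef, Finset.mem_filter, Finset.mem_erase]
      exact ⟨⟨hNne b1 hb1f.1, Finset.mem_univ b1⟩, hb1f.2⟩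
    have hb2Bv : b2 ∈ Bv := by
      rw [hBvdef, Finset.mem_filter, Finset.mem_erase]
      exact ⟨⟨hNne b2 hb2f.1, Finset.mem_univ b2⟩, hb2f.2⟩
    have hBvne5 : Bv.card ≠ 5 := by
      intro h5
      apply hno
      refine ⟨Bv, {b1, b2}, ?_, ?_, ?_, ?_⟩
      · intro a ha
        simp only [Finset.mem_insert, Finset.mem_singleton] at ha
        rcases ha with rfl | rfl
        · exact hb1Bv
        · exact hb2Bv
      · rw [h5, Finset.card_insert_of_notMem (by simp [hb12]), Finset.card_singleton]
      · exact hBvred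
      · intro i hi j hj hij
        simp only [Finset.mem_insert, Finset.mem_singleton] at hi hj
        rcases hi with rfl | rfl <;> rcases hj with rfl | rfl
        · exact absurd rfl hij
        · exact hNpair _ hb1f.1 _ hb2f.1 hb12
        · exact (hwsymm _ _).trans (hNpair _ hb1f.1 _ hb2f.1 hb12)
        · exact absurd rfl hij
    have hW5 : W.card = 5 := by omega
    obtain ⟨a1, a2, a3, hd12, hd13, hd23, hRCeq⟩ := Finset.card_eq_three.mp hRC
    have ha1 : a1 ∈ RC := by rw [hRCeq]; simp
    have ha2 : a2 ∈ RC := by rw [hRCeq]; simp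
    have ha3 : a3 ∈ RC := by rw [hRCeq]; simp
    obtain ⟨ha1N, hva1⟩ := hRCmem a1 ha1
    obtain ⟨ha2N, hva2⟩ := hRCmem a2 ha2
    obtain ⟨ha3N, hva3⟩ := hRCmem a3 ha3
    have htri : ¬ (red a1 a2 ∧ red a1 a3 ∧ red a2 a3) := by
      rintro ⟨q12, q13, q23⟩
      exact forbid4 hredsymm hwsymm hno v a1 a2 a3
        (Ne.symm (hNne a1 ha1N)) (Ne.symm (hNne a2 ha2N)) (Ne.symm (hNne a3 ha3N))
        hd12 hd13 hd23 hva1 hva2 hva3 q12 q13 q23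
        (hNfull a1 ha1N) (hNfull a2 ha2N) (hNpair a1 ha1N a2 ha2N hd12)
    have PATH : ∀ x y z : Fin 13, x ∈ N → y ∈ N → z ∈ N →
        red v x → red v y → red v z → x ≠ y → x ≠ z → y ≠ z →
        red x y → red y z → ¬ red x z → False := by
      intro x y z hxN hyN hzN hvx hvy hvz hxy hxz hyz rxy ryz nxz
      have st1 : ∀ t ∈ W, ¬ red t y := by
        intro t ht hty
        obtain ⟨htv, hvt, htN⟩ := hWfact t ht
        have ntx : ¬ red t x := by
          intro h
          exact forbid4 hredsymm hwsymm hno v x y t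
            (Ne.symm (hNne x hxN)) (Ne.symm (hNne y hyN)) (Ne.symm htv)
            hxy (fun hh => htN (hh ▸ hxN)) (fun hh => htN (hh ▸ hyN))
            hvx hvy hvt rxy ((hredsymm _ _).mpr h) ((hredsymm _ _).mpr hty)
            (hNfull x hxN) (hNfull y hyN) (hNpair x hxN y hyN hxy)
        have ntz : ¬ red t z := by
          intro h
          exact forbid4 hredsymm hwsymm hno v y z t
            (Ne.symm (hNne y hyN)) (Ne.symm (hNne z hzN)) (Ne.symm htv)
            hyz (fun hh => htN (hh ▸ hyN)) (fun hh => htN (hh ▸ hzN))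
            hvy hvz hvt ryz ((hredsymm _ _).mpr hty) ((hredsymm _ _).mpr h)
            (hNfull y hyN) (hNfull z hzN) (hNpair y hyN z hzN hyz)
        rcases hnoBlue t x z (fun hh => htN (hh ▸ hxN)) (fun hh => htN (hh ▸ hzN)) hxz
          with h | h | h
        · exact ntx h
        · exact ntz h
        · exact nxz h
      have st2 : ∀ s ∈ W, ∀ t ∈ W, s ≠ t → red s t := by
        intro s hs t ht hst
        rcases hnoBlue s t y hst (fun hh => (hWfact s hs).2.2 (hh ▸ hyN))
          (fun hh => (hWfact t ht).2.2 (hh ▸ hyN)) with h | h | h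
        · exact h
        · exact absurd h (st1 s hs)
        · exact absurd h (st1 t ht)
      obtain ⟨g1, g2, g3, g4, m1, m2, m3, m4, e12, e13, e14, e23, e24, e34⟩ :=
        exists_four (show 4 ≤ W.card by omega)
      exact noRedK5v hredsymm hwsymm hno v hOne g1 g2 g3 g4
        (hWfact g1 m1).1 (hWfact g2 m2).1 (hWfact g3 m3).1 (hWfact g4 m4).1
        e12 e13 e14 e23 e24 e34
        (hWfact g1 m1).2.1 (hWfact g2 m2).2.1 (hWfact g3 m3).2.1 (hWfact g4 m4).2.1
        (st2 g1 m1 g2 m2 e12) (st2 g1 m1 g3 m3 e13) (st2 g1 m1 g4 m4 e14)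
        (st2 g2 m2 g3 m3 e23) (st2 g2 m2 g4 m4 e24) (st2 g3 m3 g4 m4 e34)
    have SINGLE : ∀ x y z : Fin 13, x ∈ N → y ∈ N → z ∈ N →
        red v x → red v y → red v z → x ≠ y → x ≠ z → y ≠ z →
        red x y → ¬ red x z → ¬ red y z → False := by
      intro x y z hxN hyN hzN hvx hvy hvz hxy hxz hyz rxy nxz nyz
      have hnotboth : ∀ t ∈ W, red t x → ¬ red t y := by
        intro t ht htx hty
        obtain ⟨htv, hvt, htN⟩ := hWfact t ht
        exact forbid4 hredsymm hwsymm hno v x y t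
          (Ne.symm (hNne x hxN)) (Ne.symm (hNne y hyN)) (Ne.symm htv)
          hxy (fun hh => htN (hh ▸ hxN)) (fun hh => htN (hh ▸ hyN))
          hvx hvy hvt rxy ((hredsymm _ _).mpr htx) ((hredsymm _ _).mpr hty)
          (hNfull x hxN) (hNfull y hyN) (hNpair x hxN y hyN hxy)
      have st1 : ∀ t ∈ W, red t z := by
        intro t ht
        obtain ⟨htv, hvt, htN⟩ := hWfact t ht
        by_contra hntz
        by_cases htx : red t x
        · by_cases hty : red t y
          · exact hnotboth t ht htx hty
          · rcases hnoBlue t y z (fun hh => htN (hh ▸ hyN))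
              (fun hh => htN (hh ▸ hzN)) hyz with h | h | h
            · exact hty h
            · exact hntz h
            · exact nyz h
        · rcases hnoBlue t x z (fun hh => htN (hh ▸ hxN))
            (fun hh => htN (hh ▸ hzN)) hxz with h | h | h
          · exact htx h
          · exact hntz h
          · exact nxz h
      have key : ∀ U : Finset (Fin 13), (∀ t ∈ U, t ∈ W) →
          (∀ s ∈ U, ∀ t ∈ U, s ≠ t → red s t) → U.card ≤ 2 := by
        intro U hUW hUred
        by_contra hU
        push_neg at hU
        obtain ⟨g1, g2, g3, m1, m2, m3, e12, e13, e23⟩ := exists_three hU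
        have w1 := hUW g1 m1
        have w2 := hUW g2 m2
        have w3 := hUW g3 m3
        exact noRedK5v hredsymm hwsymm hno v hOne g1 g2 g3 z
          (hWfact g1 w1).1 (hWfact g2 w2).1 (hWfact g3 w3).1 (hNne z hzN)
          e12 e13 (fun hh => (hWfact g1 w1).2.2 (hh ▸ hzN))
          e23 (fun hh => (hWfact g2 w2).2.2 (hh ▸ hzN))
          (fun hh => (hWfact g3 w3).2.2 (hh ▸ hzN))
          (hWfact g1 w1).2.1 (hWfact g2 w2).2.1 (hWfact g3 w3).2.1 hvz
          (hUred g1 m1 g2 m2 e12) (hUred g1 m1 g3 m3 e13) (st1 g1 w1)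
          (hUred g2 m2 g3 m3 e23) (st1 g2 w2) (st1 g3 w3)
      have hAC : ((W.filter (fun t => red t x)) ∪
          (W.filter (fun t => ¬ red t x ∧ ¬ red t y))).card ≤ 2 := by
        apply key
        · intro t ht
          rcases Finset.mem_union.mp ht with h | h
          · exact (Finset.mem_filter.mp h).1
          · exact (Finset.mem_filter.mp h).1
        · intro s hs t ht hst
          have hsy : ¬ red s y := by
            rcases Finset.mem_union.mp hs with h | h
            · exact hnotboth s (Finset.mem_filter.mp h).1 (Finset.mem_filter.mp h).2
            · exact (Finset.mem_filter.mp h).2.2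
          have hty : ¬ red t y := by
            rcases Finset.mem_union.mp ht with h | h
            · exact hnotboth t (Finset.mem_filter.mp h).1 (Finset.mem_filter.mp h).2
            · exact (Finset.mem_filter.mp h).2.2
          have hsW : s ∈ W := by
            rcases Finset.mem_union.mp hs with h | h
            · exact (Finset.mem_filter.mp h).1
            · exact (Finset.mem_filter.mp h).1
          have htW : t ∈ W := by
            rcases Finset.mem_union.mp ht with h | h
            · exact (Finset.mem_filter.mp h).1
            · exact (Finset.mem_filter.mp h).1
          rcases hnoBlue s t y hst (fun hh => (hWfact s hsW).2.2 (hh ▸ hyN))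
            (fun hh => (hWfact t htW).2.2 (hh ▸ hyN)) with h | h | h
          · exact h
          · exact absurd h hsy
          · exact absurd h hty
      have hBC' : ((W.filter (fun t => ¬ red t x ∧ red t y)) ∪
          (W.filter (fun t => ¬ red t x ∧ ¬ red t y))).card ≤ 2 := by
        apply key
        · intro t ht
          rcases Finset.mem_union.mp ht with h | h
          · exact (Finset.mem_filter.mp h).1
          · exact (Finset.mem_filter.mp h).1
        · intro s hs t ht hst
          have hsx : ¬ red s x := by
            rcases Finset.mem_union.mp hs with h | h
            · exact (Finset.mem_filter.mp h).2.1
            · exact (Finset.mem_filter.mp h).2.1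
          have htx : ¬ red t x := by
            rcases Finset.mem_union.mp ht with h | h
            · exact (Finset.mem_filter.mp h).2.1
            · exact (Finset.mem_filter.mp h).2.1
          have hsW : s ∈ W := by
            rcases Finset.mem_union.mp hs with h | h
            · exact (Finset.mem_filter.mp h).1
            · exact (Finset.mem_filter.mp h).1
          have htW : t ∈ W := by
            rcases Finset.mem_union.mp ht with h | h
            · exact (Finset.mem_filter.mp h).1
            · exact (Finset.mem_filter.mp h).1
          rcases hnoBlue s t x hst (fun hh => (hWfact s hsW).2.2 (hh ▸ hxN))
            (fun hh => (hWfact t htW).2.2 (hh ▸ hxN)) with h | h | h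
          · exact h
          · exact absurd h hsx
          · exact absurd h htx
      have hcover : W ⊆ ((W.filter (fun t => red t x)) ∪
            (W.filter (fun t => ¬ red t x ∧ ¬ red t y))) ∪
          ((W.filter (fun t => ¬ red t x ∧ red t y)) ∪
            (W.filter (fun t => ¬ red t x ∧ ¬ red t y))) := by
        intro t ht
        by_cases htx : red t x
        · exact Finset.mem_union_left _ (Finset.mem_union_left _
            (Finset.mem_filter.mpr ⟨ht, htx⟩))
        · by_cases hty : red t y
          · exact Finset.mem_union_right _ (Finset.mem_union_left _
              (Finset.mem_filter.mpr ⟨ht, htx, hty⟩))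
          · exact Finset.mem_union_left _ (Finset.mem_union_right _
              (Finset.mem_filter.mpr ⟨ht, htx, hty⟩))
      have := Finset.card_le_card hcover
      have := Finset.card_union_le
        ((W.filter (fun t => red t x)) ∪
          (W.filter (fun t => ¬ red t x ∧ ¬ red t y)))
        ((W.filter (fun t => ¬ red t x ∧ red t y)) ∪
          (W.filter (fun t => ¬ red t x ∧ ¬ red t y)))
      omega
    by_cases q12 : red a1 a2 <;> by_cases q13 : red a1 a3 <;> by_cases q23 : red a2 a3
    · exact htri ⟨q12, q13, q23⟩
    · exact PATH a2 a1 a3 ha2N ha1N ha3N hva2 hva1 hva3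
        (Ne.symm hd12) hd23 hd13 ((hredsymm _ _).mpr q12) q13 q23
    · exact PATH a1 a2 a3 ha1N ha2N ha3N hva1 hva2 hva3
        hd12 hd13 hd23 q12 q23 q13
    · exact SINGLE a1 a2 a3 ha1N ha2N ha3N hva1 hva2 hva3
        hd12 hd13 hd23 q12 q13 q23
    · exact PATH a1 a3 a2 ha1N ha3N ha2N hva1 hva3 hva2
        hd13 hd12 (Ne.symm hd23) q13 ((hredsymm _ _).mpr q23) q12
    · exact SINGLE a1 a3 a2 ha1N ha3N ha2N hva1 hva3 hva2
        hd13 hd12 (Ne.symm hd23) q13 q12 (fun h => q23 ((hredsymm _ _).mp h))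
    · exact SINGLE a2 a3 a1 ha2N ha3N ha1N hva2 hva3 hva1
        hd23 (Ne.symm hd12) (Ne.symm hd13) q23
        (fun h => q12 ((hredsymm _ _).mpr h)) (fun h => q13 ((hredsymm _ _).mpr h))
    · rcases hnoBlue a1 a2 a3 hd12 hd13 hd23 with h | h | h <;> tauto


lemma ms_key (F : Fin 13 → Fin 13 → Prop) (hsym : ∀ i j, F i j → F j i)
    (h6 : ¬ ∃ T : Finset (Fin 13), T.card = 6 ∧ ∀ i ∈ T, ∀ j ∈ T, i ≠ j → F i j) :
    ∀ n : ℕ, ∀ u : Fin 13 → ℝ, (∀ i, 0 ≤ u i) →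
      (Finset.univ.filter (fun i => u i ≠ 0)).card ≤ n →
      (∑ i, ∑ j, (if i ≠ j ∧ F i j then (1:ℝ) else 0) * (u i * u j))
        ≤ 4/5 * (∑ i, u i)^2 := by
  classical
  have hAsymm : ∀ k l, (if k ≠ l ∧ F k l then (1:ℝ) else 0)
      = (if l ≠ k ∧ F l k then (1:ℝ) else 0) := by
    intro k l
    by_cases h : k ≠ l ∧ F k l
    · rw [if_pos h, if_pos ⟨Ne.symm h.1, hsym _ _ h.2⟩]
    · rw [if_neg h, if_neg (fun h' => h ⟨Ne.symm h'.1, hsym _ _ h'.2⟩)]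
  intro n
  induction n with
  | zero =>
    intro u hu hcard
    have hall : ∀ i, u i = 0 := by
      intro i
      by_contra h
      have hmem : i ∈ Finset.univ.filter (fun i => u i ≠ 0) := by
        rw [Finset.mem_filter]; exact ⟨Finset.mem_univ i, h⟩
      have := Finset.card_pos.mpr ⟨i, hmem⟩
      omega
    simp [hall]
  | succ n ih =>
    intro u hu hcard
    by_cases hex : ∃ i j : Fin 13, i ≠ j ∧ u i ≠ 0 ∧ u j ≠ 0 ∧ ¬ F i j
    · obtain ⟨i0, j0, hij0, hui0, huj0, hnF0⟩ := hex
      have main : ∀ p q : Fin 13, p ≠ q → u p ≠ 0 → u q ≠ 0 → ¬ F p q →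
          (∑ l, (if q ≠ l ∧ F q l then (1:ℝ) else 0) * u l)
            ≤ (∑ l, (if p ≠ l ∧ F p l then (1:ℝ) else 0) * u l) →
          (∑ i, ∑ j, (if i ≠ j ∧ F i j then (1:ℝ) else 0) * (u i * u j))
            ≤ 4/5 * (∑ i, u i)^2 := by
        intro p q hpq hup huq hnF hD
        set D : Fin 13 → ℝ := fun k => ∑ l, (if k ≠ l ∧ F k l then (1:ℝ) else 0) * u l
          with hDdef
        set e : Fin 13 → ℝ :=
          fun k => (if k = p then (1:ℝ) else 0) - (if k = q then (1:ℝ) else 0)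
          with hedef
        set u' : Fin 13 → ℝ := fun k => u k + u q * e k with hu'def
        have hu'p : u' p = u p + u q := by
          show u p + u q * ((if p = p then (1:ℝ) else 0) - (if p = q then (1:ℝ) else 0))
            = u p + u q
          rw [if_pos rfl, if_neg hpq]; ring
        have hu'q : u' q = 0 := by
          show u q + u q * ((if q = p then (1:ℝ) else 0) - (if q = q then (1:ℝ) else 0)) = 0
          rw [if_neg (Ne.symm hpq), if_pos rfl]; ring
        have hu'other : ∀ k, k ≠ p → k ≠ q → u' k = u k := by
          intro k hkp hkq
          show u k + u q * ((if k = p then (1:ℝ) else 0) - (if k = q then (1:ℝ) else 0)) = u k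
          rw [if_neg hkp, if_neg hkq]; ring
        have hu'nonneg : ∀ k, 0 ≤ u' k := by
          intro k
          by_cases hkp : k = p
          · subst hkp; rw [hu'p]; exact add_nonneg (hu k) (hu q)
          · by_cases hkq : k = q
            · subst hkq; rw [hu'q]
            · rw [hu'other k hkp hkq]; exact hu k
        have hesum : (∑ k, e k) = 0 := by
          show (∑ k : Fin 13, ((if k = p then (1:ℝ) else 0) - (if k = q then (1:ℝ) else 0))) = 0
          rw [Finset.sum_sub_distrib]
          simp
        have hsum' : ∑ k, u' k = ∑ k, u k := by
          show (∑ k : Fin 13, (u k + u q * e k)) = ∑ k, u k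
          rw [Finset.sum_add_distrib, ← Finset.mul_sum, hesum]
          ring
        have hinner : ∀ k, (∑ l, (if k ≠ l ∧ F k l then (1:ℝ) else 0) * e l)
            = (if k ≠ p ∧ F k p then (1:ℝ) else 0)
              - (if k ≠ q ∧ F k q then (1:ℝ) else 0) := by
          intro k
          have hpt : ∀ l, (if k ≠ l ∧ F k l then (1:ℝ) else 0) * e l
              = (if l = p then (if k ≠ l ∧ F k l then (1:ℝ) else 0) else 0)
                - (if l = q then (if k ≠ l ∧ F k l then (1:ℝ) else 0) else 0) := by
            intro l
            show (if k ≠ l ∧ F k l then (1:ℝ) else 0) *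
                ((if l = p then (1:ℝ) else 0) - (if l = q then (1:ℝ) else 0)) = _
            by_cases h1 : l = p <;> by_cases h2 : l = q <;> simp [h1, h2, hpq, Ne.symm hpq] <;> split_ifs <;> ring
          rw [Finset.sum_congr rfl fun l _ => hpt l, Finset.sum_sub_distrib,
            Finset.sum_ite_eq' Finset.univ p
              (fun l => (if k ≠ l ∧ F k l then (1:ℝ) else 0)),
            Finset.sum_ite_eq' Finset.univ q
              (fun l => (if k ≠ l ∧ F k l then (1:ℝ) else 0))]
          simp
        have hqp : ¬ F q p := fun h => hnF (hsym q p h)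
        have hQe : (∑ k, ∑ l, (if k ≠ l ∧ F k l then (1:ℝ) else 0) * (e k * e l)) = 0 := by
          have step1 : ∀ k, (∑ l, (if k ≠ l ∧ F k l then (1:ℝ) else 0) * (e k * e l))
              = e k * ((if k ≠ p ∧ F k p then (1:ℝ) else 0)
                - (if k ≠ q ∧ F k q then (1:ℝ) else 0)) := by
            intro k
            rw [← hinner k, Finset.mul_sum]
            exact Finset.sum_congr rfl fun l _ => by ring
          rw [Finset.sum_congr rfl fun k _ => step1 k]
          have step2 : ∀ k : Fin 13, e k * ((if k ≠ p ∧ F k p then (1:ℝ) else 0)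
                - (if k ≠ q ∧ F k q then (1:ℝ) else 0))
              = (if k = p then ((if k ≠ p ∧ F k p then (1:ℝ) else 0)
                  - (if k ≠ q ∧ F k q then (1:ℝ) else 0)) else 0)
                - (if k = q then ((if k ≠ p ∧ F k p then (1:ℝ) else 0)
                  - (if k ≠ q ∧ F k q then (1:ℝ) else 0)) else 0) := by
            intro k
            show ((if k = p then (1:ℝ) else 0) - (if k = q then (1:ℝ) else 0)) * _ = _
            by_cases h1 : k = p <;> by_cases h2 : k = q <;> simp [h1, h2, hpq, Ne.symm hpq] <;> split_ifs <;> ring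
          rw [Finset.sum_congr rfl fun k _ => step2 k, Finset.sum_sub_distrib,
            Finset.sum_ite_eq' Finset.univ p _, Finset.sum_ite_eq' Finset.univ q _]
          simp [hnF, hqp]
        have hS1 : (∑ k, ∑ l, (if k ≠ l ∧ F k l then (1:ℝ) else 0) * (e k * u l))
            = D p - D q := by
          have step1 : ∀ k, (∑ l, (if k ≠ l ∧ F k l then (1:ℝ) else 0) * (e k * u l))
              = e k * D k := by
            intro k
            rw [hDdef]
            show _ = e k * (∑ l, (if k ≠ l ∧ F k l then (1:ℝ) else 0) * u l)
            rw [Finset.mul_sum]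
            exact Finset.sum_congr rfl fun l _ => by ring
          rw [Finset.sum_congr rfl fun k _ => step1 k]
          have step2 : ∀ k : Fin 13, e k * D k
              = (if k = p then D k else 0) - (if k = q then D k else 0) := by
            intro k
            show ((if k = p then (1:ℝ) else 0) - (if k = q then (1:ℝ) else 0)) * D k = _
            by_cases h1 : k = p <;> by_cases h2 : k = q <;> simp [h1, h2, hpq, Ne.symm hpq] <;> split_ifs <;> ring
          rw [Finset.sum_congr rfl fun k _ => step2 k, Finset.sum_sub_distrib,
            Finset.sum_ite_eq' Finset.univ p _, Finset.sum_ite_eq' Finset.univ q _]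
          simp
        have hS2 : (∑ k, ∑ l, (if k ≠ l ∧ F k l then (1:ℝ) else 0) * (u k * e l))
            = D p - D q := by
          have step1 : ∀ k, (∑ l, (if k ≠ l ∧ F k l then (1:ℝ) else 0) * (u k * e l))
              = u k * ((if k ≠ p ∧ F k p then (1:ℝ) else 0)
                - (if k ≠ q ∧ F k q then (1:ℝ) else 0)) := by
            intro k
            rw [← hinner k, Finset.mul_sum]
            exact Finset.sum_congr rfl fun l _ => by ring
          rw [Finset.sum_congr rfl fun k _ => step1 k]
          have step2 : ∀ k : Fin 13, u k * ((if k ≠ p ∧ F k p then (1:ℝ) else 0)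
                - (if k ≠ q ∧ F k q then (1:ℝ) else 0))
              = (if p ≠ k ∧ F p k then (1:ℝ) else 0) * u k
                - (if q ≠ k ∧ F q k then (1:ℝ) else 0) * u k := by
            intro k
            rw [← hAsymm k p, ← hAsymm k q]
            ring
          rw [Finset.sum_congr rfl fun k _ => step2 k, Finset.sum_sub_distrib, hDdef]
        have hexpand : ∀ k l : Fin 13,
            (if k ≠ l ∧ F k l then (1:ℝ) else 0) * (u' k * u' l)
            = (if k ≠ l ∧ F k l then (1:ℝ) else 0) * (u k * u l)
              + (u q * ((if k ≠ l ∧ F k l then (1:ℝ) else 0) * (e k * u l))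
              + (u q * ((if k ≠ l ∧ F k l then (1:ℝ) else 0) * (u k * e l))
              + u q * u q * ((if k ≠ l ∧ F k l then (1:ℝ) else 0) * (e k * e l)))) := by
          intro k l
          have hk : u' k = u k + u q * e k := rfl
          have hl : u' l = u l + u q * e l := rfl
          rw [hk, hl]; ring
        have hQ' : (∑ k, ∑ l, (if k ≠ l ∧ F k l then (1:ℝ) else 0) * (u' k * u' l))
            = (∑ k, ∑ l, (if k ≠ l ∧ F k l then (1:ℝ) else 0) * (u k * u l))
              + (u q * (D p - D q) + (u q * (D p - D q) + u q * u q * 0)) := by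
          rw [show (∑ k, ∑ l, (if k ≠ l ∧ F k l then (1:ℝ) else 0) * (u' k * u' l))
              = ∑ k, ∑ l, ((if k ≠ l ∧ F k l then (1:ℝ) else 0) * (u k * u l)
              + (u q * ((if k ≠ l ∧ F k l then (1:ℝ) else 0) * (e k * u l))
              + (u q * ((if k ≠ l ∧ F k l then (1:ℝ) else 0) * (u k * e l))
              + u q * u q * ((if k ≠ l ∧ F k l then (1:ℝ) else 0) * (e k * e l)))))
            from Finset.sum_congr rfl fun k _ => Finset.sum_congr rfl fun l _ => hexpand k l]
          simp only [Finset.sum_add_distrib, ← Finset.mul_sum]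
          rw [hQe, hS1, hS2]
        have hsupp' : (Finset.univ.filter (fun k => u' k ≠ 0)).card ≤ n := by
          have hsub : Finset.univ.filter (fun k => u' k ≠ 0)
              ⊆ (Finset.univ.filter (fun k => u k ≠ 0)).erase q := by
            intro k hk
            rw [Finset.mem_filter] at hk
            have hkq : k ≠ q := by
              intro hkq; subst hkq; exact hk.2 hu'q
            rw [Finset.mem_erase, Finset.mem_filter]
            refine ⟨hkq, Finset.mem_univ k, ?_⟩
            by_cases hkp : k = p
            · subst hkp; exact hup
            · rw [← hu'other k hkp hkq]; exact hk.2
          have h1 := Finset.card_le_card hsub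
          have hqmem : q ∈ Finset.univ.filter (fun k => u k ≠ 0) := by
            rw [Finset.mem_filter]; exact ⟨Finset.mem_univ q, huq⟩
          rw [Finset.card_erase_of_mem hqmem] at h1
          omega
        have hQmono : (∑ k, ∑ l, (if k ≠ l ∧ F k l then (1:ℝ) else 0) * (u k * u l))
            ≤ (∑ k, ∑ l, (if k ≠ l ∧ F k l then (1:ℝ) else 0) * (u' k * u' l)) := by
          rw [hQ']
          have h1 : 0 ≤ u q * (D p - D q) :=
            mul_nonneg (hu q) (sub_nonneg.mpr hD)
          nlinarith
        calc (∑ k, ∑ l, (if k ≠ l ∧ F k l then (1:ℝ) else 0) * (u k * u l))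
            ≤ (∑ k, ∑ l, (if k ≠ l ∧ F k l then (1:ℝ) else 0) * (u' k * u' l)) := hQmono
          _ ≤ 4/5 * (∑ k, u' k)^2 := ih u' hu'nonneg hsupp'
          _ = 4/5 * (∑ k, u k)^2 := by rw [hsum']
      rcases le_total (∑ l, (if j0 ≠ l ∧ F j0 l then (1:ℝ) else 0) * u l)
          (∑ l, (if i0 ≠ l ∧ F i0 l then (1:ℝ) else 0) * u l) with h | h
      · exact main i0 j0 hij0 hui0 huj0 hnF0 h
      · exact main j0 i0 hij0.symm huj0 hui0 (fun hF => hnF0 (hsym _ _ hF)) h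
    · push_neg at hex
      have hsupp5 : (Finset.univ.filter (fun i => u i ≠ 0)).card ≤ 5 := by
        by_contra hc
        push_neg at hc
        obtain ⟨T, hTsub, hT6⟩ := Finset.exists_subset_card_eq
          (s := Finset.univ.filter (fun i => u i ≠ 0)) (n := 6) hc
        exact h6 ⟨T, hT6, fun i hi j hj hij =>
          hex i j hij (Finset.mem_filter.mp (hTsub hi)).2
            (Finset.mem_filter.mp (hTsub hj)).2⟩
      have hQle : (∑ i, ∑ j, (if i ≠ j ∧ F i j then (1:ℝ) else 0) * (u i * u j))
          ≤ (∑ i, u i)^2 - ∑ i, (u i)^2 := by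
        have hpt : ∀ i j : Fin 13, (if i ≠ j ∧ F i j then (1:ℝ) else 0) * (u i * u j)
            ≤ u i * u j - (if i = j then u i * u j else 0) := by
          intro i j
          by_cases hij : i = j
          · subst hij
            rw [if_neg (fun hcon => hcon.1 rfl), if_pos rfl]
            ring_nf
            exact le_refl _
          · rw [if_neg hij]
            have huu : 0 ≤ u i * u j := mul_nonneg (hu i) (hu j)
            by_cases hF : F i j
            · rw [if_pos ⟨hij, hF⟩]; linarith
            · rw [if_neg (fun hcon => hF hcon.2)]; linarith
        calc (∑ i, ∑ j, (if i ≠ j ∧ F i j then (1:ℝ) else 0) * (u i * u j))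
            ≤ ∑ i, ∑ j, (u i * u j - (if i = j then u i * u j else 0)) := by
              refine Finset.sum_le_sum fun i _ => Finset.sum_le_sum fun j _ => hpt i j
          _ = (∑ i, ∑ j, u i * u j) - ∑ i, ∑ j, (if i = j then u i * u j else 0) := by
              rw [← Finset.sum_sub_distrib]
              exact Finset.sum_congr rfl fun i _ => by rw [← Finset.sum_sub_distrib]
          _ = (∑ i, u i)^2 - ∑ i, (u i)^2 := by
              congr 1
              · rw [← Finset.sum_mul_sum, sq]
              · refine Finset.sum_congr rfl fun i _ => ?_
                rw [Finset.sum_ite_eq Finset.univ i (fun j => u i * u j)]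
                simp [sq]
      have hCauchy : (∑ i, u i)^2 ≤ 5 * ∑ i, (u i)^2 := by
        have husum : (∑ i, u i)
            = ∑ i ∈ Finset.univ.filter (fun i => u i ≠ 0), u i := by
          rw [Finset.sum_filter_ne_zero]
        have h1 : (∑ i ∈ Finset.univ.filter (fun i => u i ≠ 0), u i)^2
            ≤ ((Finset.univ.filter (fun i => u i ≠ 0)).card : ℝ)
              * ∑ i ∈ Finset.univ.filter (fun i => u i ≠ 0), (u i)^2 := by
          exact_mod_cast sq_sum_le_card_mul_sum_sq
            (s := Finset.univ.filter (fun i => u i ≠ 0)) (f := u)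
        have h2 : ((Finset.univ.filter (fun i => u i ≠ 0)).card : ℝ) ≤ 5 := by
          exact_mod_cast hsupp5
        have h3 : (∑ i ∈ Finset.univ.filter (fun i => u i ≠ 0), (u i)^2)
            ≤ ∑ i, (u i)^2 :=
          Finset.sum_le_sum_of_subset_of_nonneg (Finset.subset_univ _)
            (fun i _ _ => sq_nonneg _)
        have h4 : (0:ℝ) ≤ ∑ i ∈ Finset.univ.filter (fun i => u i ≠ 0), (u i)^2 :=
          Finset.sum_nonneg fun i _ => sq_nonneg _
        rw [husum]
        calc (∑ i ∈ Finset.univ.filter (fun i => u i ≠ 0), u i)^2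
            ≤ ((Finset.univ.filter (fun i => u i ≠ 0)).card : ℝ)
              * ∑ i ∈ Finset.univ.filter (fun i => u i ≠ 0), (u i)^2 := h1
          _ ≤ 5 * ∑ i ∈ Finset.univ.filter (fun i => u i ≠ 0), (u i)^2 := by
              apply mul_le_mul_of_nonneg_right h2 h4
          _ ≤ 5 * ∑ i, (u i)^2 := by linarith
      linarith


lemma half_double (g : Fin 13 → Fin 13 → ℝ) (hg : ∀ i j, g i j = g j i) :
    ∑ i, ∑ j, (if i < j then g i j else 0)
      = ((∑ i, ∑ j, g i j) - ∑ i, g i i) / 2 := by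
  have key : ∀ i j : Fin 13, g i j =
      (if i < j then g i j else 0) + (if j < i then g i j else 0) +
        (if i = j then g i j else 0) := by
    intro i j
    rcases lt_trichotomy i j with h | h | h
    · simp [h, asymm h, h.ne]
    · simp [h, lt_irrefl]
    · simp [h, asymm h, (ne_of_gt h)]
  have e1 : (∑ i, ∑ j, g i j)
      = ((∑ i, ∑ j, (if i < j then g i j else 0))
        + (∑ i, ∑ j, (if j < i then g i j else 0)))
        + (∑ i, ∑ j, (if i = j then g i j else 0)) := by
    rw [← Finset.sum_add_distrib, ← Finset.sum_add_distrib]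
    refine Finset.sum_congr rfl fun i _ => ?_
    rw [← Finset.sum_add_distrib, ← Finset.sum_add_distrib]
    exact Finset.sum_congr rfl fun j _ => key i j
  have e2 : (∑ i, ∑ j, (if j < i then g i j else 0))
      = (∑ i, ∑ j, (if i < j then g i j else 0)) := by
    rw [Finset.sum_comm]
    refine Finset.sum_congr rfl fun i _ => Finset.sum_congr rfl fun j _ => ?_
    rcases lt_or_ge i j with h | h
    · simp only [if_pos h]
      exact (hg j i).symm ▸ (hg i j ▸ rfl)
    · simp [not_lt_of_ge h]
  have e3 : (∑ i, ∑ j, (if i = j then g i j else 0)) = ∑ i, g i i := by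
    refine Finset.sum_congr rfl fun i _ => ?_
    rw [Finset.sum_ite_eq Finset.univ i (fun j => g i j)]
    simp
  rw [e2, e3] at e1
  linarith


end TwoHalfEdgesAux

open TwoHalfEdgesAux in
/-- Claim t=13: in a weighted 2-colored K₁₃ (weights in {1/2, 1}) with no blue triangle, no
red generalized K₇, and density at least 7/16, every vertex is incident to at least two
half edges. -/
theorem two_half_edges_K13 (w : Fin 13 → Fin 13 → ℝ) (red : Fin 13 → Fin 13 → Prop)
    (hwsymm : ∀ i j, w i j = w j i)
    (hwval : ∀ i j : Fin 13, i ≠ j → w i j = 1 / 2 ∨ w i j = 1)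
    (hredsymm : ∀ i j, red i j ↔ red j i)
    (hnoBlueTriangle : ∀ a b c : Fin 13, a ≠ b → a ≠ c → b ≠ c →
        red a b ∨ red a c ∨ red b c)
    (hnoRedGenK7 : ¬ ∃ X Y : Finset (Fin 13), Y ⊆ X ∧ X.card + Y.card = 7 ∧
        (∀ i ∈ X, ∀ j ∈ X, i ≠ j → red i j) ∧
        (∀ i ∈ Y, ∀ j ∈ Y, i ≠ j → w i j = 1))
    (hdens : ∃ u : Fin 13 → ℝ, (∀ i, 0 ≤ u i) ∧ ∑ i, u i = 1 ∧
        7 / 16 ≤ ∑ i, ∑ j, if i < j then w i j * u i * u j else 0) :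
    ∀ i : Fin 13, ∃ j k : Fin 13, j ≠ i ∧ k ≠ i ∧ j ≠ k ∧
      w i j = 1 / 2 ∧ w i k = 1 / 2 := by
  classical
  intro v
  by_contra hbad
  have hOne : ∀ j k : Fin 13, j ≠ v → k ≠ v → j ≠ k → w v j = 1 ∨ w v k = 1 := by
    intro j k hjv hkv hjk
    rcases hwval v j (Ne.symm hjv) with h1 | h1
    · rcases hwval v k (Ne.symm hkv) with h2 | h2
      · exact absurd ⟨j, k, hjv, hkv, hjk, h1, h2⟩ hbad
      · right; exact h2
    · left; exact h1
  obtain ⟨u, hu0, husum, hobj⟩ := hdens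
  have h6 : ¬ ∃ T : Finset (Fin 13), T.card = 6 ∧
      ∀ i ∈ T, ∀ j ∈ T, i ≠ j → w i j = 1 := by
    rintro ⟨T, hT6, hTfull⟩
    exact core hredsymm hwsymm hnoBlueTriangle hnoRedGenK7 v hOne T hT6 hTfull
  have hFsym : ∀ i j : Fin 13, w i j = 1 → w j i = 1 :=
    fun i j h => (hwsymm j i).trans h
  have hsuppcard : (Finset.univ.filter (fun i => u i ≠ 0)).card ≤ 13 := by
    have := Finset.card_filter_le Finset.univ (fun i => u i ≠ 0)
    simpa using this
  have hms := ms_key (fun i j => w i j = 1) hFsym h6 13 u hu0 hsuppcard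
  rw [husum] at hms
  -- hms : Q ≤ 4/5 * 1^2
  -- identity for the full part
  have hg2sym : ∀ i j : Fin 13,
      (if i ≠ j ∧ w i j = 1 then (1:ℝ) else 0) * (u i * u j)
        = (if j ≠ i ∧ w j i = 1 then (1:ℝ) else 0) * (u j * u i) := by
    intro i j
    by_cases h : i ≠ j ∧ w i j = 1
    · rw [if_pos h, if_pos ⟨Ne.symm h.1, hFsym i j h.2⟩]
      ring
    · rw [if_neg h, if_neg (fun h' => h ⟨Ne.symm h'.1, hFsym j i h'.2⟩)]
      ring
  have hPfull : (∑ i, ∑ j, (if i < j ∧ w i j = 1 then u i * u j else 0))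
      = ((∑ i, ∑ j, (if i ≠ j ∧ w i j = 1 then (1:ℝ) else 0) * (u i * u j)) - 0) / 2 := by
    have := half_double
      (fun i j => (if i ≠ j ∧ w i j = 1 then (1:ℝ) else 0) * (u i * u j)) hg2sym
    have hdiag : (∑ i : Fin 13,
        (if i ≠ i ∧ w i i = 1 then (1:ℝ) else 0) * (u i * u i)) = 0 := by
      refine Finset.sum_eq_zero fun i _ => ?_
      rw [if_neg (fun h => h.1 rfl)]
      ring
    rw [hdiag] at this
    rw [← this]
    refine Finset.sum_congr rfl fun i _ => Finset.sum_congr rfl fun j _ => ?_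
    by_cases h1 : i < j
    · by_cases h2 : w i j = 1
      · simp [h1, h2, ne_of_lt h1]
      · simp [h1, h2]
    · simp [h1]
  have hP : (∑ i, ∑ j, (if i < j then u i * u j else 0))
      = (1 - ∑ i, u i * u i) / 2 := by
    have := half_double (fun i j => u i * u j)
      (fun i j => mul_comm (u i) (u j))
    rw [show (∑ i, ∑ j, u i * u j) = 1 by
      rw [← Finset.sum_mul_sum]
      rw [husum]; ring] at this
    exact this
  -- pointwise bound on the objective
  have hobjle : (∑ i, ∑ j, if i < j then w i j * u i * u j else 0)
      ≤ (∑ i, ∑ j, (if i < j then (1/2) * (u i * u j) else 0))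
        + (∑ i, ∑ j, (if i < j ∧ w i j = 1 then (1/2) * (u i * u j) else 0)) := by
    rw [← Finset.sum_add_distrib]
    refine Finset.sum_le_sum fun i _ => ?_
    rw [← Finset.sum_add_distrib]
    refine Finset.sum_le_sum fun j _ => ?_
    have huu : 0 ≤ u i * u j := mul_nonneg (hu0 i) (hu0 j)
    split_ifs with h1 h2 h2
    · rw [h2.2]
      nlinarith
    · rcases hwval i j (ne_of_lt h1) with h3 | h3
      · rw [h3]
        nlinarith
      · exact absurd ⟨h1, h3⟩ h2
    · exact absurd h2.1 h1
    · norm_num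
  have hhalf1 : (∑ i, ∑ j, (if i < j then (1/2) * (u i * u j) else 0))
      = (1/2) * (∑ i, ∑ j, (if i < j then u i * u j else 0)) := by
    rw [Finset.mul_sum]
    refine Finset.sum_congr rfl fun i _ => ?_
    rw [Finset.mul_sum]
    refine Finset.sum_congr rfl fun j _ => ?_
    by_cases h : i < j <;> simp [h]
  have hhalf2 : (∑ i, ∑ j, (if i < j ∧ w i j = 1 then (1/2) * (u i * u j) else 0))
      = (1/2) * (∑ i, ∑ j, (if i < j ∧ w i j = 1 then u i * u j else 0)) := by
    rw [Finset.mul_sum]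
    refine Finset.sum_congr rfl fun i _ => ?_
    rw [Finset.mul_sum]
    refine Finset.sum_congr rfl fun j _ => ?_
    by_cases h : i < j ∧ w i j = 1 <;> simp [h]
  -- Cauchy–Schwarz on all 13 coordinates
  have hCS : (1:ℝ) ≤ 13 * ∑ i, u i * u i := by
    have h1 : (∑ i, u i)^2 ≤ ((Finset.univ : Finset (Fin 13)).card : ℝ)
        * ∑ i, (u i)^2 := by
      exact_mod_cast sq_sum_le_card_mul_sum_sq
        (s := (Finset.univ : Finset (Fin 13))) (f := u)
    rw [husum] at h1
    have h2 : ((Finset.univ : Finset (Fin 13)).card : ℝ) = 13 := by simp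
    rw [h2] at h1
    have h3 : (∑ i, (u i)^2) = ∑ i, u i * u i :=
      Finset.sum_congr rfl fun i _ => by ring
    rw [h3] at h1
    linarith
  rw [hhalf1, hhalf2, hP, hPfull] at hobjle
  -- final numeric contradiction
  nlinarith [hobjle, hobj, hms, hCS]
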